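/- Let $a\ge 2$ and let $\Pi_{(a^2)}$ be the set of set partitions of $[2a]$ into two blocks of size $a$, embedded in $\mathbb{C}^{\binom{[2a]}{2}}$ as $0$-$1$ vectors. For pairwise distinct $i,j,k,l\in[2a]$, the polynomial $(x_{\{i,j\}}-\tfrac12)(x_{\{k,l\}}-\tfrac12)-(x_{\{i,k\}}-\tfrac12)(x_{\{j,l\}}-\tfrac12)$ vanishes on every point of $\Pi_{(a^2)}$. -/
import Mathlib


open MvPolynomial

/-- Variables indexed by 2-element subsets of `[n]`. -/
abbrev Idx (n : ℕ) := {S : Finset (Fin n) // S.card = 2}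

open Classical in
/-- The 0-1 point associated to an unordered set partition of `[n]`. -/
noncomputable def ptOf {n : ℕ} (P : Finpartition (Finset.univ : Finset (Fin n))) : Idx n → ℂ :=
  fun S => if ∃ B ∈ P.parts, S.1 ⊆ B then 1 else 0

/-- The variable `x_{{i,j}}` (zero if `i = j`, but it is only used when `i ≠ j`). -/
noncomputable def XE {n : ℕ} (i j : Fin n) : MvPolynomial (Idx n) ℂ :=
  if h : i ≠ j then X ⟨{i, j}, Finset.card_pair h⟩ else 0


theorem stmt5 (a : ℕ) (ha : 2 ≤ a)
    (P : Finpartition (Finset.univ : Finset (Fin (2 * a))))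
    (hcard : P.parts.card = 2) (hP : ∀ B ∈ P.parts, B.card = a)
    (i j k l : Fin (2 * a)) (hij : i ≠ j) (hik : i ≠ k) (hil : i ≠ l)
    (hjk : j ≠ k) (hjl : j ≠ l) (hkl : k ≠ l) :
    eval (ptOf P)
      ((XE i j - C (1 / 2)) * (XE k l - C (1 / 2)) -
        (XE i k - C (1 / 2)) * (XE j l - C (1 / 2))) = 0 := by
  obtain ⟨B1, B2, hne, hparts⟩ := Finset.card_eq_two.mp hcard
  classical
  set ε : Fin (2 * a) → ℂ := fun x => if x ∈ B1 then 1 else -1 with hε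
  have hmem : ∀ x : Fin (2 * a), x ∈ B1 ∨ x ∈ B2 := by
    intro x
    have : x ∈ P.parts.sup id := by rw [P.sup_parts]; exact Finset.mem_univ x
    rw [Finset.mem_sup] at this
    obtain ⟨B, hB, hxB⟩ := this
    rw [hparts, Finset.mem_insert, Finset.mem_singleton] at hB
    rcases hB with rfl | rfl
    · exact Or.inl hxB
    · exact Or.inr hxB
  have hdisj : ∀ x : Fin (2 * a), x ∈ B1 → x ∉ B2 := by
    intro x hx1 hx2
    have h1 : B1 ∈ P.parts := by rw [hparts]; simp
    have h2 : B2 ∈ P.parts := by rw [hparts]; simp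
    exact (Finset.disjoint_left.mp (P.disjoint h1 h2 hne)) hx1 hx2
  have key : ∀ x y : Fin (2 * a), x ≠ y →
      eval (ptOf P) (XE x y) = 1 / 2 + (ε x * ε y) / 2 := by
    intro x y hxy
    rw [XE, dif_pos hxy, eval_X, ptOf]
    have hiff : (∃ B ∈ P.parts, ({x, y} : Finset (Fin (2 * a))) ⊆ B) ↔
        (x ∈ B1 ↔ y ∈ B1) := by
      constructor
      · rintro ⟨B, hB, hsub⟩
        rw [hparts, Finset.mem_insert, Finset.mem_singleton] at hB
        have hx := hsub (Finset.mem_insert_self x {y})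
        have hy := hsub (Finset.mem_insert_of_mem (Finset.mem_singleton_self y))
        rcases hB with rfl | rfl
        · simp [hx, hy]
        · constructor
          · intro h; exact absurd hx (hdisj x h)
          · intro h; exact absurd hy (hdisj y h)
      · intro h
        by_cases hx : x ∈ B1
        · exact ⟨B1, by rw [hparts]; simp, by
            intro z hz
            rw [Finset.mem_insert, Finset.mem_singleton] at hz
            rcases hz with rfl | rfl
            · exact hx
            · exact h.mp hx⟩
        · have hx2 := (hmem x).resolve_left hx
          have hy : y ∉ B1 := fun hy => hx (h.mpr hy)
          have hy2 := (hmem y).resolve_left hy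
          exact ⟨B2, by rw [hparts]; simp, by
            intro z hz
            rw [Finset.mem_insert, Finset.mem_singleton] at hz
            rcases hz with rfl | rfl
            · exact hx2
            · exact hy2⟩
    by_cases h : x ∈ B1 ↔ y ∈ B1
    · rw [if_pos (hiff.mpr h), hε]
      by_cases hx : x ∈ B1
      · simp only [hx, h.mp hx, if_pos]; norm_num
      · have hy : y ∉ B1 := fun hy => hx (h.mpr hy)
        simp only [hx, hy, if_neg, not_false_iff]; norm_num
    · rw [if_neg (fun hc => h (hiff.mp hc)), hε]
      by_cases hx : x ∈ B1
      · have hy : y ∉ B1 := fun hy => h ⟨fun _ => hy, fun _ => hx⟩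
        simp only [hx, hy, if_pos, if_neg, not_false_iff]; norm_num
      · have hy : y ∈ B1 := by
          by_contra hy
          exact h (iff_of_false hx hy)
        simp only [hx, hy, if_pos, if_neg, not_false_iff]; norm_num
  have hsq : ∀ x : Fin (2 * a), ε x * ε x = 1 := by
    intro x
    rw [hε]
    by_cases hx : x ∈ B1 <;> simp [hx]
  simp only [map_sub, map_mul, eval_C, key i j hij, key k l hkl, key i k hik,
    key j l hjl]
  ring
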